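/- Let g : ℝ × ℝ × ℝ → ℝ be twice continuously differentiable (C²) and define F on {(x₁,x₂,x₃) ∈ ℝ³ : x₁² + x₂² > 0} by F(x₁,x₂,x₃) = g(x₁, x_p, x) where x_p = √(x₁² + x₂²) and x = √(x₁² + x₂² + x₃²). Then at every such point, ΔF = g₁₁ + g₂₂ + g₃₃ + 2·((x₁/x_p)·g₁₂ + (x₁/x)·g₁₃ + (x_p/x)·g₂₃) + (1/x_p)·g₂ + (2/x)·g₃, where all partial derivatives gᵢ, gᵢⱼ of g (with respect to its i-th and j-th arguments) are evaluated at (x₁, x_p, x) (the Laplacian in the nested rectangular coordinate system (x₁, x_p, x)). -/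

import Mathlib

/-- The Laplacian `∂²F/∂x₁² + ∂²F/∂x₂² + ∂²F/∂x₃²` of a function `F : ℝ → ℝ → ℝ → ℝ`
(curried function of three real variables) at the point `(a, b, c)`. -/
noncomputable def lap3 (F : ℝ → ℝ → ℝ → ℝ) (a b c : ℝ) : ℝ :=
  deriv (fun s => deriv (fun u => F u b c) s) a +
  deriv (fun s => deriv (fun u => F a u c) s) b +
  deriv (fun s => deriv (fun u => F a b u) s) c

/-- Partial derivative of `g : ℝ × ℝ × ℝ → ℝ` with respect to its first argument. -/
noncomputable def pd1 (g : ℝ × ℝ × ℝ → ℝ) (p : ℝ × ℝ × ℝ) : ℝ :=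
  deriv (fun t => g (t, p.2.1, p.2.2)) p.1

/-- Partial derivative of `g : ℝ × ℝ × ℝ → ℝ` with respect to its second argument. -/
noncomputable def pd2 (g : ℝ × ℝ × ℝ → ℝ) (p : ℝ × ℝ × ℝ) : ℝ :=
  deriv (fun t => g (p.1, t, p.2.2)) p.2.1

/-- Partial derivative of `g : ℝ × ℝ × ℝ → ℝ` with respect to its third argument. -/
noncomputable def pd3 (g : ℝ × ℝ × ℝ → ℝ) (p : ℝ × ℝ × ℝ) : ℝ :=
  deriv (fun t => g (p.1, p.2.1, t)) p.2.2

open Real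

lemma curve1 (a b c : ℝ) : HasDerivAt (fun t : ℝ => ((t, b, c) : ℝ × ℝ × ℝ)) (1, 0, 0) a :=
  (hasDerivAt_id a).prodMk ((hasDerivAt_const a b).prodMk (hasDerivAt_const a c))

lemma curve2 (a b c : ℝ) : HasDerivAt (fun t : ℝ => ((a, t, c) : ℝ × ℝ × ℝ)) (0, 1, 0) b :=
  (hasDerivAt_const b a).prodMk ((hasDerivAt_id b).prodMk (hasDerivAt_const b c))

lemma curve3 (a b c : ℝ) : HasDerivAt (fun t : ℝ => ((a, b, t) : ℝ × ℝ × ℝ)) (0, 0, 1) c :=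
  (hasDerivAt_const c a).prodMk ((hasDerivAt_const c b).prodMk (hasDerivAt_id c))

lemma pd1_eq (g : ℝ × ℝ × ℝ → ℝ) (p : ℝ × ℝ × ℝ) (hh : DifferentiableAt ℝ g p) :
    pd1 g p = fderiv ℝ g p (1, 0, 0) := by
  have : HasDerivAt (fun t => g (t, p.2.1, p.2.2)) (fderiv ℝ g p (1,0,0)) p.1 := by
    have := hh.hasFDerivAt.comp_hasDerivAt p.1 (curve1 p.1 p.2.1 p.2.2)
    exact this
  exact this.deriv

lemma pd2_eq (g : ℝ × ℝ × ℝ → ℝ) (p : ℝ × ℝ × ℝ) (hh : DifferentiableAt ℝ g p) :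
    pd2 g p = fderiv ℝ g p (0, 1, 0) := by
  have : HasDerivAt (fun t => g (p.1, t, p.2.2)) (fderiv ℝ g p (0,1,0)) p.2.1 := by
    have := hh.hasFDerivAt.comp_hasDerivAt p.2.1 (curve2 p.1 p.2.1 p.2.2)
    exact this
  exact this.deriv

lemma pd3_eq (g : ℝ × ℝ × ℝ → ℝ) (p : ℝ × ℝ × ℝ) (hh : DifferentiableAt ℝ g p) :
    pd3 g p = fderiv ℝ g p (0, 0, 1) := by
  have : HasDerivAt (fun t => g (p.1, p.2.1, t)) (fderiv ℝ g p (0,0,1)) p.2.2 := by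
    have := hh.hasFDerivAt.comp_hasDerivAt p.2.2 (curve3 p.1 p.2.1 p.2.2)
    exact this
  exact this.deriv

/-- chain rule along a curve -/
lemma chain3 (h : ℝ × ℝ × ℝ → ℝ) {γ1 γ2 γ3 : ℝ → ℝ} {d1 d2 d3 a : ℝ}
    (h1 : HasDerivAt γ1 d1 a) (h2 : HasDerivAt γ2 d2 a) (h3 : HasDerivAt γ3 d3 a)
    (hh : DifferentiableAt ℝ h (γ1 a, γ2 a, γ3 a)) :
    HasDerivAt (fun t => h (γ1 t, γ2 t, γ3 t))
      (pd1 h (γ1 a, γ2 a, γ3 a) * d1 + pd2 h (γ1 a, γ2 a, γ3 a) * d2 +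
        pd3 h (γ1 a, γ2 a, γ3 a) * d3) a := by
  have key := hh.hasFDerivAt.comp_hasDerivAt a (h1.prodMk (h2.prodMk h3))
  have e : fderiv ℝ h (γ1 a, γ2 a, γ3 a) (d1, d2, d3) =
      pd1 h (γ1 a, γ2 a, γ3 a) * d1 + pd2 h (γ1 a, γ2 a, γ3 a) * d2 +
        pd3 h (γ1 a, γ2 a, γ3 a) * d3 := by
    rw [pd1_eq h _ hh, pd2_eq h _ hh, pd3_eq h _ hh]
    have : (d1, d2, d3) = d1 • ((1:ℝ), (0:ℝ), (0:ℝ)) + d2 • ((0:ℝ),(1:ℝ),(0:ℝ)) +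
        d3 • ((0:ℝ),(0:ℝ),(1:ℝ)) := by
      simp [Prod.ext_iff]
    rw [this, map_add, map_add, map_smul, map_smul, map_smul]
    simp only [smul_eq_mul]
    ring
  rw [← e]
  exact key

lemma pd1_fun (g : ℝ × ℝ × ℝ → ℝ) (hg : Differentiable ℝ g) :
    pd1 g = fun p => fderiv ℝ g p (1, 0, 0) := funext fun p => pd1_eq g p (hg p)

lemma contDiff_pd1 (g : ℝ × ℝ × ℝ → ℝ) (hg : ContDiff ℝ 2 g) : ContDiff ℝ 1 (pd1 g) := by
  rw [pd1_fun g (hg.differentiable (by norm_num))]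
  exact (ContinuousLinearMap.apply ℝ ℝ ((1:ℝ),(0:ℝ),(0:ℝ))).contDiff.comp
    (hg.fderiv_right (by norm_num))

lemma pd2_fun (g : ℝ × ℝ × ℝ → ℝ) (hg : Differentiable ℝ g) :
    pd2 g = fun p => fderiv ℝ g p (0, 1, 0) := funext fun p => pd2_eq g p (hg p)
lemma pd3_fun (g : ℝ × ℝ × ℝ → ℝ) (hg : Differentiable ℝ g) :
    pd3 g = fun p => fderiv ℝ g p (0, 0, 1) := funext fun p => pd3_eq g p (hg p)

lemma contDiff_pd2 (g : ℝ × ℝ × ℝ → ℝ) (hg : ContDiff ℝ 2 g) : ContDiff ℝ 1 (pd2 g) := by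
  rw [pd2_fun g (hg.differentiable (by norm_num))]
  exact (ContinuousLinearMap.apply ℝ ℝ ((0:ℝ),(1:ℝ),(0:ℝ))).contDiff.comp
    (hg.fderiv_right (by norm_num))
lemma contDiff_pd3 (g : ℝ × ℝ × ℝ → ℝ) (hg : ContDiff ℝ 2 g) : ContDiff ℝ 1 (pd3 g) := by
  rw [pd3_fun g (hg.differentiable (by norm_num))]
  exact (ContinuousLinearMap.apply ℝ ℝ ((0:ℝ),(0:ℝ),(1:ℝ))).contDiff.comp
    (hg.fderiv_right (by norm_num))

lemma symm_pd (g : ℝ × ℝ × ℝ → ℝ) (hg : ContDiff ℝ 2 g) (v w p : ℝ × ℝ × ℝ) :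
    fderiv ℝ (fun q => fderiv ℝ g q v) p w = fderiv ℝ (fun q => fderiv ℝ g q w) p v := by
  have hdg : Differentiable ℝ (fderiv ℝ g) :=
    (hg.fderiv_right (m := 1) (by norm_num)).differentiable (by norm_num)
  have h1 : ∀ u : ℝ × ℝ × ℝ, fderiv ℝ (fun q => fderiv ℝ g q u) p =
      (ContinuousLinearMap.apply ℝ ℝ u).comp (fderiv ℝ (fderiv ℝ g) p) := by
    intro u
    have heq : (fun q => fderiv ℝ g q u) = (ContinuousLinearMap.apply ℝ ℝ u) ∘ (fderiv ℝ g) := rfl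
    rw [heq, fderiv_comp _ (ContinuousLinearMap.differentiableAt _) (hdg p),
      ContinuousLinearMap.fderiv]
  rw [h1 v, h1 w]
  simp only [ContinuousLinearMap.coe_comp', Function.comp_apply,
    ContinuousLinearMap.apply_apply]
  exact second_derivative_symmetric
    (fun y => (hg.differentiable (by norm_num) y).hasFDerivAt) ((hdg p).hasFDerivAt) w v

lemma pd_symm12 (g : ℝ × ℝ × ℝ → ℝ) (hg : ContDiff ℝ 2 g) (p : ℝ × ℝ × ℝ) :
    pd1 (pd2 g) p = pd2 (pd1 g) p := by
  have hd := hg.differentiable (by norm_num)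
  rw [pd1_eq _ _ (((contDiff_pd2 g hg).differentiable one_ne_zero) p),
      pd2_eq _ _ (((contDiff_pd1 g hg).differentiable one_ne_zero) p),
      pd2_fun g hd, pd1_fun g hd]
  exact symm_pd g hg _ _ p

lemma pd_symm13 (g : ℝ × ℝ × ℝ → ℝ) (hg : ContDiff ℝ 2 g) (p : ℝ × ℝ × ℝ) :
    pd1 (pd3 g) p = pd3 (pd1 g) p := by
  have hd := hg.differentiable (by norm_num)
  rw [pd1_eq _ _ (((contDiff_pd3 g hg).differentiable one_ne_zero) p),
      pd3_eq _ _ (((contDiff_pd1 g hg).differentiable one_ne_zero) p),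
      pd3_fun g hd, pd1_fun g hd]
  exact symm_pd g hg _ _ p

lemma pd_symm23 (g : ℝ × ℝ × ℝ → ℝ) (hg : ContDiff ℝ 2 g) (p : ℝ × ℝ × ℝ) :
    pd2 (pd3 g) p = pd3 (pd2 g) p := by
  have hd := hg.differentiable (by norm_num)
  rw [pd2_eq _ _ (((contDiff_pd3 g hg).differentiable one_ne_zero) p),
      pd3_eq _ _ (((contDiff_pd2 g hg).differentiable one_ne_zero) p),
      pd3_fun g hd, pd2_fun g hd]
  exact symm_pd g hg _ _ p

lemma sqrtD {c : ℝ → ℝ} {u : ℝ} (hc : HasDerivAt c (2 * u) u) (h : 0 < c u) :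
    HasDerivAt (fun t => Real.sqrt (c t)) (u / Real.sqrt (c u)) u := by
  have h2 := (Real.hasDerivAt_sqrt h.ne').comp u hc
  refine h2.congr_deriv ?_
  have hs : Real.sqrt (c u) ≠ 0 := (Real.sqrt_pos.2 h).ne'
  field_simp

set_option maxHeartbeats 2000000 in
/-- For a `C²` function `g : ℝ × ℝ × ℝ → ℝ` and
`F (x₁, x₂, x₃) = g (x₁, x_p, x)` with `x_p = √(x₁² + x₂²)` and
`x = √(x₁² + x₂² + x₃²)`, at every point with `x₁² + x₂² > 0` the Laplacian of `F`
equals `g₁₁ + g₂₂ + g₃₃ + 2 ((x₁/x_p) g₁₂ + (x₁/x) g₁₃ + (x_p/x) g₂₃)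
+ (1/x_p) g₂ + (2/x) g₃` evaluated at `(x₁, x_p, x)` — the Laplacian in the nested
rectangular coordinate system `(x₁, x_p, x)`. -/
theorem laplacian_nested_coordinates_3d (g : ℝ × ℝ × ℝ → ℝ) (hg : ContDiff ℝ 2 g)
    (x₁ x₂ x₃ : ℝ) (h : 0 < x₁ ^ 2 + x₂ ^ 2) :
    lap3 (fun a b c =>
        g (a, Real.sqrt (a ^ 2 + b ^ 2), Real.sqrt (a ^ 2 + b ^ 2 + c ^ 2))) x₁ x₂ x₃ =
      pd1 (pd1 g) (x₁, Real.sqrt (x₁ ^ 2 + x₂ ^ 2), Real.sqrt (x₁ ^ 2 + x₂ ^ 2 + x₃ ^ 2)) +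
      pd2 (pd2 g) (x₁, Real.sqrt (x₁ ^ 2 + x₂ ^ 2), Real.sqrt (x₁ ^ 2 + x₂ ^ 2 + x₃ ^ 2)) +
      pd3 (pd3 g) (x₁, Real.sqrt (x₁ ^ 2 + x₂ ^ 2), Real.sqrt (x₁ ^ 2 + x₂ ^ 2 + x₃ ^ 2)) +
      2 * ((x₁ / Real.sqrt (x₁ ^ 2 + x₂ ^ 2)) *
            pd2 (pd1 g) (x₁, Real.sqrt (x₁ ^ 2 + x₂ ^ 2),
              Real.sqrt (x₁ ^ 2 + x₂ ^ 2 + x₃ ^ 2)) +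
          (x₁ / Real.sqrt (x₁ ^ 2 + x₂ ^ 2 + x₃ ^ 2)) *
            pd3 (pd1 g) (x₁, Real.sqrt (x₁ ^ 2 + x₂ ^ 2),
              Real.sqrt (x₁ ^ 2 + x₂ ^ 2 + x₃ ^ 2)) +
          (Real.sqrt (x₁ ^ 2 + x₂ ^ 2) / Real.sqrt (x₁ ^ 2 + x₂ ^ 2 + x₃ ^ 2)) *
            pd3 (pd2 g) (x₁, Real.sqrt (x₁ ^ 2 + x₂ ^ 2),
              Real.sqrt (x₁ ^ 2 + x₂ ^ 2 + x₃ ^ 2))) +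
      (1 / Real.sqrt (x₁ ^ 2 + x₂ ^ 2)) *
        pd2 g (x₁, Real.sqrt (x₁ ^ 2 + x₂ ^ 2), Real.sqrt (x₁ ^ 2 + x₂ ^ 2 + x₃ ^ 2)) +
      (2 / Real.sqrt (x₁ ^ 2 + x₂ ^ 2 + x₃ ^ 2)) *
        pd3 g (x₁, Real.sqrt (x₁ ^ 2 + x₂ ^ 2), Real.sqrt (x₁ ^ 2 + x₂ ^ 2 + x₃ ^ 2)) := by
  have hgd : Differentiable ℝ g := hg.differentiable (by norm_num)
  have hpd1 : Differentiable ℝ (pd1 g) := (contDiff_pd1 g hg).differentiable one_ne_zero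
  have hpd2 : Differentiable ℝ (pd2 g) := (contDiff_pd2 g hg).differentiable one_ne_zero
  have hpd3 : Differentiable ℝ (pd3 g) := (contDiff_pd3 g hg).differentiable one_ne_zero
  simp only [lap3]
  set r := Real.sqrt (x₁ ^ 2 + x₂ ^ 2) with hrdef
  set ρ := Real.sqrt (x₁ ^ 2 + x₂ ^ 2 + x₃ ^ 2) with hρdef
  have hρpos : 0 < x₁ ^ 2 + x₂ ^ 2 + x₃ ^ 2 := by nlinarith [sq_nonneg x₃]
  have hr : 0 < r := Real.sqrt_pos.2 h
  have hρ : 0 < ρ := Real.sqrt_pos.2 hρpos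
  have hr2 : r ^ 2 = x₁ ^ 2 + x₂ ^ 2 := Real.sq_sqrt h.le
  have hρ2 : ρ ^ 2 = x₁ ^ 2 + x₂ ^ 2 + x₃ ^ 2 := Real.sq_sqrt hρpos.le
  set q : ℝ × ℝ × ℝ := (x₁, r, ρ) with hqdef
  -- sqrt curve derivatives
  -- direction 3
  have hρf : ∀ u : ℝ, HasDerivAt (fun t : ℝ => Real.sqrt (x₁ ^ 2 + x₂ ^ 2 + t ^ 2))
      (u / Real.sqrt (x₁ ^ 2 + x₂ ^ 2 + u ^ 2)) u := fun u =>
    sqrtD (by simpa using (hasDerivAt_pow 2 u).const_add (x₁ ^ 2 + x₂ ^ 2))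
      (by nlinarith [sq_nonneg u])
  have hd3 : deriv (fun u => g (x₁, r, Real.sqrt (x₁ ^ 2 + x₂ ^ 2 + u ^ 2))) =
      fun u => pd3 g (x₁, r, Real.sqrt (x₁ ^ 2 + x₂ ^ 2 + u ^ 2)) *
        (u / Real.sqrt (x₁ ^ 2 + x₂ ^ 2 + u ^ 2)) := by
    funext u
    have := chain3 g (hasDerivAt_const u x₁) (hasDerivAt_const u r) (hρf u) (hgd _)
    rw [this.deriv]
    ring
  have hT3 : deriv (fun s => deriv
      (fun u => g (x₁, r, Real.sqrt (x₁ ^ 2 + x₂ ^ 2 + u ^ 2))) s) x₃ =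
      (pd1 (pd3 g) q * 0 + pd2 (pd3 g) q * 0 + pd3 (pd3 g) q * (x₃ / ρ)) * (x₃ / ρ) +
        pd3 g q * ((1 * ρ - x₃ * (x₃ / ρ)) / ρ ^ 2) := by
    simp only [hd3]
    have hP := chain3 (pd3 g) (hasDerivAt_const x₃ x₁) (hasDerivAt_const x₃ r)
      (hρf x₃) (hpd3 _)
    have hQ := (hasDerivAt_id x₃).div (hρf x₃) hρ.ne'
    exact (hP.mul hQ).deriv
  -- direction 1
  have hev1 : ∀ᶠ u in nhds x₁, 0 < u ^ 2 + x₂ ^ 2 := by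
    have hopen : IsOpen {u : ℝ | 0 < u ^ 2 + x₂ ^ 2} :=
      isOpen_lt continuous_const ((continuous_pow 2).add continuous_const)
    exact hopen.mem_nhds h
  have hrf1 : ∀ u : ℝ, 0 < u ^ 2 + x₂ ^ 2 → HasDerivAt
      (fun t : ℝ => Real.sqrt (t ^ 2 + x₂ ^ 2)) (u / Real.sqrt (u ^ 2 + x₂ ^ 2)) u :=
    fun u hu => sqrtD (by simpa using (hasDerivAt_pow 2 u).add_const (x₂ ^ 2)) hu
  have hρf1 : ∀ u : ℝ, 0 < u ^ 2 + x₂ ^ 2 → HasDerivAt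
      (fun t : ℝ => Real.sqrt (t ^ 2 + x₂ ^ 2 + x₃ ^ 2))
      (u / Real.sqrt (u ^ 2 + x₂ ^ 2 + x₃ ^ 2)) u :=
    fun u hu => sqrtD (by simpa using ((hasDerivAt_pow 2 u).add_const (x₂ ^ 2)).add_const (x₃ ^ 2))
      (by nlinarith [sq_nonneg x₃])
  have hevd1 : deriv (fun u => g (u, Real.sqrt (u ^ 2 + x₂ ^ 2),
        Real.sqrt (u ^ 2 + x₂ ^ 2 + x₃ ^ 2))) =ᶠ[nhds x₁]
      fun u => pd1 g (u, Real.sqrt (u ^ 2 + x₂ ^ 2), Real.sqrt (u ^ 2 + x₂ ^ 2 + x₃ ^ 2)) * 1 +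
        pd2 g (u, Real.sqrt (u ^ 2 + x₂ ^ 2), Real.sqrt (u ^ 2 + x₂ ^ 2 + x₃ ^ 2)) *
          (u / Real.sqrt (u ^ 2 + x₂ ^ 2)) +
        pd3 g (u, Real.sqrt (u ^ 2 + x₂ ^ 2), Real.sqrt (u ^ 2 + x₂ ^ 2 + x₃ ^ 2)) *
          (u / Real.sqrt (u ^ 2 + x₂ ^ 2 + x₃ ^ 2)) := by
    filter_upwards [hev1] with u hu
    exact (chain3 g (hasDerivAt_id u) (hrf1 u hu) (hρf1 u hu) (hgd _)).deriv
  have hT1 : deriv (fun s => deriv (fun u => g (u, Real.sqrt (u ^ 2 + x₂ ^ 2),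
        Real.sqrt (u ^ 2 + x₂ ^ 2 + x₃ ^ 2))) s) x₁ =
      (pd1 (pd1 g) q * 1 + pd2 (pd1 g) q * (x₁ / r) + pd3 (pd1 g) q * (x₁ / ρ)) * 1 +
      ((pd1 (pd2 g) q * 1 + pd2 (pd2 g) q * (x₁ / r) + pd3 (pd2 g) q * (x₁ / ρ)) * (x₁ / r) +
        pd2 g q * ((1 * r - x₁ * (x₁ / r)) / r ^ 2)) +
      ((pd1 (pd3 g) q * 1 + pd2 (pd3 g) q * (x₁ / r) + pd3 (pd3 g) q * (x₁ / ρ)) * (x₁ / ρ) +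
        pd3 g q * ((1 * ρ - x₁ * (x₁ / ρ)) / ρ ^ 2)) := by
    rw [hevd1.deriv_eq]
    have hA := chain3 (pd1 g) (hasDerivAt_id x₁) (hrf1 x₁ h) (hρf1 x₁ h) (hpd1 _)
    have hB := chain3 (pd2 g) (hasDerivAt_id x₁) (hrf1 x₁ h) (hρf1 x₁ h) (hpd2 _)
    have hC := chain3 (pd3 g) (hasDerivAt_id x₁) (hrf1 x₁ h) (hρf1 x₁ h) (hpd3 _)
    have hQr := (hasDerivAt_id x₁).div (hrf1 x₁ h) hr.ne'
    have hQρ := (hasDerivAt_id x₁).div (hρf1 x₁ h) hρ.ne'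
    exact (((hA.mul_const 1).add (hB.mul hQr)).add (hC.mul hQρ)).deriv
  -- direction 2
  have hev2 : ∀ᶠ u in nhds x₂, 0 < x₁ ^ 2 + u ^ 2 := by
    have hopen : IsOpen {u : ℝ | 0 < x₁ ^ 2 + u ^ 2} :=
      isOpen_lt continuous_const (continuous_const.add (continuous_pow 2))
    exact hopen.mem_nhds h
  have hrf2 : ∀ u : ℝ, 0 < x₁ ^ 2 + u ^ 2 → HasDerivAt
      (fun t : ℝ => Real.sqrt (x₁ ^ 2 + t ^ 2)) (u / Real.sqrt (x₁ ^ 2 + u ^ 2)) u :=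
    fun u hu => sqrtD (by simpa using (hasDerivAt_pow 2 u).const_add (x₁ ^ 2)) hu
  have hρf2 : ∀ u : ℝ, 0 < x₁ ^ 2 + u ^ 2 → HasDerivAt
      (fun t : ℝ => Real.sqrt (x₁ ^ 2 + t ^ 2 + x₃ ^ 2))
      (u / Real.sqrt (x₁ ^ 2 + u ^ 2 + x₃ ^ 2)) u :=
    fun u hu => sqrtD (by simpa using ((hasDerivAt_pow 2 u).const_add (x₁ ^ 2)).add_const (x₃ ^ 2))
      (by nlinarith [sq_nonneg x₃])
  have hevd2 : deriv (fun u => g (x₁, Real.sqrt (x₁ ^ 2 + u ^ 2),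
        Real.sqrt (x₁ ^ 2 + u ^ 2 + x₃ ^ 2))) =ᶠ[nhds x₂]
      fun u => pd1 g (x₁, Real.sqrt (x₁ ^ 2 + u ^ 2), Real.sqrt (x₁ ^ 2 + u ^ 2 + x₃ ^ 2)) * 0 +
        pd2 g (x₁, Real.sqrt (x₁ ^ 2 + u ^ 2), Real.sqrt (x₁ ^ 2 + u ^ 2 + x₃ ^ 2)) *
          (u / Real.sqrt (x₁ ^ 2 + u ^ 2)) +
        pd3 g (x₁, Real.sqrt (x₁ ^ 2 + u ^ 2), Real.sqrt (x₁ ^ 2 + u ^ 2 + x₃ ^ 2)) *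
          (u / Real.sqrt (x₁ ^ 2 + u ^ 2 + x₃ ^ 2)) := by
    filter_upwards [hev2] with u hu
    exact (chain3 g (hasDerivAt_const u x₁) (hrf2 u hu) (hρf2 u hu) (hgd _)).deriv
  have hT2 : deriv (fun s => deriv (fun u => g (x₁, Real.sqrt (x₁ ^ 2 + u ^ 2),
        Real.sqrt (x₁ ^ 2 + u ^ 2 + x₃ ^ 2))) s) x₂ =
      (pd1 (pd1 g) q * 0 + pd2 (pd1 g) q * (x₂ / r) + pd3 (pd1 g) q * (x₂ / ρ)) * 0 +
      ((pd1 (pd2 g) q * 0 + pd2 (pd2 g) q * (x₂ / r) + pd3 (pd2 g) q * (x₂ / ρ)) * (x₂ / r) +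
        pd2 g q * ((1 * r - x₂ * (x₂ / r)) / r ^ 2)) +
      ((pd1 (pd3 g) q * 0 + pd2 (pd3 g) q * (x₂ / r) + pd3 (pd3 g) q * (x₂ / ρ)) * (x₂ / ρ) +
        pd3 g q * ((1 * ρ - x₂ * (x₂ / ρ)) / ρ ^ 2)) := by
    rw [hevd2.deriv_eq]
    have hA := chain3 (pd1 g) (hasDerivAt_const x₂ x₁) (hrf2 x₂ h) (hρf2 x₂ h) (hpd1 _)
    have hB := chain3 (pd2 g) (hasDerivAt_const x₂ x₁) (hrf2 x₂ h) (hρf2 x₂ h) (hpd2 _)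
    have hC := chain3 (pd3 g) (hasDerivAt_const x₂ x₁) (hrf2 x₂ h) (hρf2 x₂ h) (hpd3 _)
    have hQr := (hasDerivAt_id x₂).div (hrf2 x₂ h) hr.ne'
    have hQρ := (hasDerivAt_id x₂).div (hρf2 x₂ h) hρ.ne'
    exact (((hA.mul_const 0).add (hB.mul hQr)).add (hC.mul hQρ)).deriv
  rw [hT1, hT2, hT3]
  rw [pd_symm12 g hg q, pd_symm13 g hg q, pd_symm23 g hg q]
  field_simp
  linear_combination (ρ^3*pd2 g q - r*ρ^3*pd2 (pd2 g) q -
      2*r^2*ρ^2*pd3 (pd2 g) q) * hr2 +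
    (r^3*pd3 g q - r^3*ρ*pd3 (pd3 g) q) * hρ2
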